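/- Let A be a nice, safe minimal and safe centralised history-deterministic coBüchi automaton recognising L ⊆ Σ^ω. If R is a recurrent residual of L, then the localisation A|_R is nice, safe minimal and safe centralised. If R is a transient residual of L (i.e., Σ_R = ∅), then exactly one state of A recognises R. -/

import Mathlib

/-- A transition of an automaton: source state, input letter, output colour,
destination state.  (Acceptance is transition-based.) -/
structure AutTrans (Q A Γ : Type) where
  src : Q
  lab : A
  out : Γ
  dst : Q

/-- An (ω-)automaton with finite state set `Q`, input alphabet `A`,
output alphabet `Γ`, initial state `init`, transition set `delta` and
acceptance condition `acc ⊆ Γ^ω`. -/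
structure Automaton (A Γ : Type) where
  Q : Type
  fin : Fintype Q
  init : Q
  delta : Set (AutTrans Q A Γ)
  acc : Set (ℕ → Γ)

/-- The generalised Büchi condition over the colour set `C`
(output alphabet `𝒫(C)`): every colour appears infinitely often. -/
def genBuchi (C : Type) : Set (ℕ → Set C) :=
  {f | ∀ c : C, ∀ n : ℕ, ∃ m : ℕ, n ≤ m ∧ c ∈ f m}

/-- The generalised coBüchi condition over the colour set `C`:
some colour appears only finitely often. -/
def genCoBuchi (C : Type) : Set (ℕ → Set C) :=
  {f | ∃ c : C, ∃ n : ℕ, ∀ m : ℕ, n ≤ m → c ∉ f m}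

namespace Automaton

variable {A Γ : Type}

/-- Number of states. -/
def size (M : Automaton A Γ) : ℕ := @Fintype.card M.Q M.fin

/-- `ρ` is a run of `M` on the word `w`, starting in the state `q`. -/
def IsRunFrom (M : Automaton A Γ) (q : M.Q) (w : ℕ → A)
    (ρ : ℕ → AutTrans M.Q A Γ) : Prop :=
  (ρ 0).src = q ∧ ∀ n : ℕ, ρ n ∈ M.delta ∧ (ρ n).lab = w n ∧ (ρ n).dst = (ρ (n + 1)).src

/-- The language of `M` with initial state `q`. -/
def LangFrom (M : Automaton A Γ) (q : M.Q) : Set (ℕ → A) :=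
  {w | ∃ ρ : ℕ → AutTrans M.Q A Γ, M.IsRunFrom q w ρ ∧ (fun n => (ρ n).out) ∈ M.acc}

/-- The language of `M`. -/
def Lang (M : Automaton A Γ) : Set (ℕ → A) := M.LangFrom M.init

/-- For every state and letter there is at most one outgoing transition. -/
def Deterministic (M : Automaton A Γ) : Prop :=
  ∀ t ∈ M.delta, ∀ t' ∈ M.delta, t.src = t'.src → t.lab = t'.lab → t = t'

/-- For every state and letter there is at least one outgoing transition. -/
def Complete (M : Automaton A Γ) : Prop :=
  ∀ (p : M.Q) (a : A), ∃ t ∈ M.delta, t.src = p ∧ t.lab = a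

/-- The infinite sequence of transitions chosen by a resolver `r` on the word `w`
(`r` is applied to all nonempty finite prefixes of `w`). -/
def resRun (M : Automaton A Γ) (r : List A → AutTrans M.Q A Γ) (w : ℕ → A) :
    ℕ → AutTrans M.Q A Γ :=
  fun n => r (List.ofFn fun i : Fin (n + 1) => w i)

/-- `r` is a resolver for `M`: on every word it induces a run,
which is accepting whenever the word is in the language of `M`. -/
def IsResolver (M : Automaton A Γ) (r : List A → AutTrans M.Q A Γ) : Prop :=
  ∀ w : ℕ → A, M.IsRunFrom M.init w (M.resRun r w) ∧
    (w ∈ M.Lang → (fun n => (M.resRun r w n).out) ∈ M.acc)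

/-- History-determinism: existence of a resolver. -/
def HistoryDeterministic (M : Automaton A Γ) : Prop := ∃ r, M.IsResolver r

/-- `M` admits a resolver such that every state occurs on some accepting run
induced by the resolver. -/
def ResolverTrim (M : Automaton A Γ) : Prop :=
  ∃ r, M.IsResolver r ∧ ∀ q : M.Q, ∃ w ∈ M.Lang, ∃ n : ℕ, (M.resRun r w n).src = q

/-- Reachability along transitions of `M`. -/
def Reach (M : Automaton A Γ) (p q : M.Q) : Prop :=
  Relation.ReflTransGen (fun x y => ∃ t ∈ M.delta, t.src = x ∧ t.dst = y) p q

/-- Nondeterministic choices lead to language-equivalent states. -/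
def SemanticallyDeterministic (M : Automaton A Γ) : Prop :=
  ∀ t ∈ M.delta, ∀ t' ∈ M.delta, t.src = t'.src → t.lab = t'.lab →
    M.LangFrom t.dst = M.LangFrom t'.dst

/- CoBüchi notions: a coBüchi automaton has output alphabet `Set Unit`
(`𝒫(C)` with `|C| = 1`); a transition is a coBüchi transition iff its output
is `{()}` (i.e. `() ∈ out`), and safe iff its output is `∅`. -/

/-- A safe (non-coBüchi) transition from `p` to `q`. -/
def SafeStep (M : Automaton A (Set Unit)) (p q : M.Q) : Prop :=
  ∃ t ∈ M.delta, t.src = p ∧ t.dst = q ∧ () ∉ t.out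

/-- `p` and `q` lie in the same safe component (same SCC of the safe graph). -/
def SafeConn (M : Automaton A (Set Unit)) (p q : M.Q) : Prop :=
  Relation.ReflTransGen M.SafeStep p q ∧ Relation.ReflTransGen M.SafeStep q p

/-- The safe component (as a set of states) of `q`. -/
def safeComponentOf (M : Automaton A (Set Unit)) (q : M.Q) : Set M.Q :=
  {p | M.SafeConn p q}

/-- `(S, D)` is a safe component of `M`, given with its set of safe transitions. -/
def IsSafeComponent (M : Automaton A (Set Unit)) (S : Set M.Q)
    (D : Set (AutTrans M.Q A (Set Unit))) : Prop :=
  (∃ q : M.Q, S = M.safeComponentOf q) ∧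
    D = {t | t ∈ M.delta ∧ t.src ∈ S ∧ t.dst ∈ S ∧ () ∉ t.out}

/-- The safe language of the state `q`: words labelling an infinite safe path from `q`. -/
def SafeLang (M : Automaton A (Set Unit)) (q : M.Q) : Set (ℕ → A) :=
  {w | ∃ ρ : ℕ → AutTrans M.Q A (Set Unit),
    M.IsRunFrom q w ρ ∧ ∀ n : ℕ, () ∉ (ρ n).out}

/-- The automaton restricted to safe transitions is deterministic. -/
def SafeDeterministic (M : Automaton A (Set Unit)) : Prop :=
  ∀ t ∈ M.delta, ∀ t' ∈ M.delta, () ∉ t.out → () ∉ t'.out →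
    t.src = t'.src → t.lab = t'.lab → t = t'

/-- Every transition joining two distinct safe components is a coBüchi transition. -/
def NormalForm (M : Automaton A (Set Unit)) : Prop :=
  ∀ t ∈ M.delta, () ∉ t.out → M.SafeConn t.src t.dst

/-- A coBüchi automaton is nice if all states are reachable and it is
semantically deterministic, in normal form, and safe deterministic. -/
def Nice (M : Automaton A (Set Unit)) : Prop :=
  (∀ q : M.Q, M.Reach M.init q) ∧ M.SemanticallyDeterministic ∧
    M.NormalForm ∧ M.SafeDeterministic

/-- Equivalent states with equal safe languages are equal. -/
def SafeMinimal (M : Automaton A (Set Unit)) : Prop :=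
  ∀ p q : M.Q, M.LangFrom p = M.LangFrom q → M.SafeLang p = M.SafeLang q → p = q

/-- Equivalent states with safe languages comparable for inclusion lie in the
same safe component. -/
def SafeCentralised (M : Automaton A (Set Unit)) : Prop :=
  ∀ p q : M.Q, M.LangFrom p = M.LangFrom q →
    (M.SafeLang p ⊆ M.SafeLang q ∨ M.SafeLang q ⊆ M.SafeLang p) → M.SafeConn p q

end Automaton

/-- The word `u · w`. -/
def wordAppend {A : Type} (u : List A) (w : ℕ → A) : ℕ → A :=
  fun n => if h : n < u.length then u.get ⟨n, h⟩ else w (n - u.length)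

/-- The residual `u⁻¹L`. -/
def residualLang {A : Type} (u : List A) (L : Set (ℕ → A)) : Set (ℕ → A) :=
  {w | wordAppend u w ∈ L}

/-- `L` is prefix-independent: `u⁻¹L = L` for every finite word `u`. -/
def PrefixIndependent {A : Type} (L : Set (ℕ → A)) : Prop :=
  ∀ u : List A, residualLang u L = L

/-- The local alphabet `Σ_R` at the residual `R`: nonempty finite words `v`
with `v⁻¹R = R` such that no proper nonempty prefix `v'` of `v`
satisfies `v'⁻¹R = R`.  (For `R = u⁻¹L` this says `(uv)⁻¹L = u⁻¹L` and
`(uv')⁻¹L ≠ u⁻¹L` for proper nonempty prefixes.) -/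
def localAlphabet {A : Type} (R : Set (ℕ → A)) : Set (List A) :=
  {v | v ≠ [] ∧ residualLang v R = R ∧
    ∀ v' : List A, v' <+: v → v' ≠ [] → v' ≠ v → residualLang v' R ≠ R}

/-- `PathCol M q w X p`: there is a finite path of `M` from `q` to `p`
labelled by `w` whose transitions produce exactly the set of colours `X`
(the union of the outputs along the path). -/
inductive PathCol {A C : Type} (M : Automaton A (Set C)) :
    M.Q → List A → Set C → M.Q → Prop
  | nil (q : M.Q) : PathCol M q [] ∅ q
  | cons {q r : M.Q} {a : A} {w : List A} {X : Set C}
      (t : AutTrans M.Q A (Set C)) (ht : t ∈ M.delta) (hsrc : t.src = q)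
      (hlab : t.lab = a) (htail : PathCol M t.dst w X r) :
      PathCol M q (a :: w) (t.out ∪ X) r

/-- The localisation `A|_R` of a generalised coBüchi automaton `M` to the
residual `R`, with initial state `q0`: states are the states of `M`
recognising `R`, the alphabet is `Σ_R`, and there is a transition
`q →^{w:X} p` for every finite path of `M` from `q` to `p` labelled by
`w ∈ Σ_R` producing the set of colours `X`. -/
noncomputable def localAut {A C : Type} (M : Automaton A (Set C)) (R : Set (ℕ → A))
    (q0 : {q : M.Q // M.LangFrom q = R}) :
    Automaton (↥(localAlphabet R)) (Set C) where
  Q := {q : M.Q // M.LangFrom q = R}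
  fin := by
    letI := M.fin
    classical
    infer_instance
  init := q0
  delta := {t | PathCol M t.src.1 t.lab.1 t.out t.dst.1}
  acc := genCoBuchi C

/-- The automaton `M` with initial state `q`. -/
def withInit {A Γ : Type} (M : Automaton A Γ) (q : M.Q) : Automaton A Γ :=
  { M with init := q }

/-- Recolour the automaton `M` via `f`, keeping states, initial state and the
underlying transitions, and replacing the acceptance condition by `acc'`. -/
def recolor {A Γ Γ' : Type} (M : Automaton A Γ) (f : AutTrans M.Q A Γ → Γ')
    (acc' : Set (ℕ → Γ')) : Automaton A Γ' where
  Q := M.Q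
  fin := M.fin
  init := M.init
  delta := {t' | ∃ t ∈ M.delta, t'.src = t.src ∧ t'.lab = t.lab ∧ t'.out = f t ∧ t'.dst = t.dst}
  acc := acc'

/-- Concatenation of the first `k` blocks of a sequence of finite words. -/
def flattenPrefix {A : Type} (u : ℕ → List A) (k : ℕ) : List A :=
  (List.ofFn fun i : Fin k => u i).flatten

/-- `x ∈ A^ω` is the concatenation of the infinite sequence of finite words `u`. -/
def IsFlatten {A : Type} (u : ℕ → List A) (x : ℕ → A) : Prop :=
  ∀ (k n : ℕ) (h : n < (flattenPrefix u k).length),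
    (flattenPrefix u k).get ⟨n, h⟩ = x n

/-- Cascade composition `B ∘ M`: the outputs of `M` are fed as inputs to `B`. -/
def composeAut {A Γ Γ' : Type} (B : Automaton Γ Γ') (M : Automaton A Γ) :
    Automaton A Γ' where
  Q := M.Q × B.Q
  fin := by letI := M.fin; letI := B.fin; infer_instance
  init := (M.init, B.init)
  delta := {t | ∃ tM ∈ M.delta, ∃ tB ∈ B.delta,
    t.src = (tM.src, tB.src) ∧ t.lab = tM.lab ∧ tB.lab = tM.out ∧
    t.out = tB.out ∧ t.dst = (tM.dst, tB.dst)}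
  acc := B.acc

/-- The language `L_G = ⋂_v L_v` associated with a graph `G`: words over the
vertices such that for every vertex `v`, either the factor `vv` occurs
infinitely often, or letters outside the closed neighbourhood `N[v]` occur
infinitely often. -/
def LG {V : Type} (G : SimpleGraph V) : Set (ℕ → V) :=
  {w | ∀ v : V, (∀ n : ℕ, ∃ m : ℕ, n ≤ m ∧ w m = v ∧ w (m + 1) = v) ∨
      (∀ n : ℕ, ∃ m : ℕ, n ≤ m ∧ w m ≠ v ∧ ¬ G.Adj v (w m))}

section S11Aux

open Automaton

variable {A : Type}

/-- The first `n` letters of an infinite word, as a list. -/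
def listPrefix (w : ℕ → A) (n : ℕ) : List A := List.ofFn fun i : Fin n => w i

@[simp] lemma listPrefix_length (w : ℕ → A) (n : ℕ) : (listPrefix w n).length = n := by
  simp [listPrefix]

lemma listPrefix_getElem (w : ℕ → A) (n i : ℕ) (h : i < (listPrefix w n).length) :
    (listPrefix w n)[i] = w i := by
  simp [listPrefix] at h ⊢

@[simp] lemma listPrefix_zero (w : ℕ → A) : listPrefix w 0 = [] := by simp [listPrefix]

lemma listPrefix_succ (w : ℕ → A) (n : ℕ) :
    listPrefix w (n + 1) = listPrefix w n ++ [w n] := by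
  simp only [listPrefix, List.ofFn_succ', List.concat_eq_append]
  rfl

@[simp] lemma wordAppend_nil (w : ℕ → A) : wordAppend [] w = w := by
  funext n; simp [wordAppend]

lemma wordAppend_lt (u : List A) (w : ℕ → A) (n : ℕ) (h : n < u.length) :
    wordAppend u w n = u[n] := by simp [wordAppend, h]

lemma wordAppend_ge (u : List A) (w : ℕ → A) (n : ℕ) (h : u.length ≤ n) :
    wordAppend u w n = w (n - u.length) := by
  have : ¬ n < u.length := by omega
  simp [wordAppend, this]

lemma wordAppend_append (u v : List A) (w : ℕ → A) :
    wordAppend (u ++ v) w = wordAppend u (wordAppend v w) := by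
  funext n
  rcases lt_or_ge n u.length with h | h
  · rw [wordAppend_lt _ _ _ (by simp; omega), wordAppend_lt _ _ _ h,
      List.getElem_append_left h]
  · rcases lt_or_ge n (u.length + v.length) with h2 | h2
    · rw [wordAppend_lt _ _ _ (by simp; omega), wordAppend_ge _ _ _ h,
        wordAppend_lt _ _ _ (by omega), List.getElem_append_right h]
    · rw [wordAppend_ge _ _ _ (by simp; omega), wordAppend_ge _ _ _ h,
        wordAppend_ge _ _ _ (by omega)]
      congr 1
      simp; omega

@[simp] lemma residualLang_nil (L : Set (ℕ → A)) : residualLang [] L = L := by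
  ext w; simp [residualLang]

lemma residualLang_append (u v : List A) (L : Set (ℕ → A)) :
    residualLang (u ++ v) L = residualLang v (residualLang u L) := by
  ext w; simp [residualLang, wordAppend_append]

lemma mem_genCoBuchi_unit (f : ℕ → Set Unit) :
    f ∈ genCoBuchi Unit ↔ ∃ n : ℕ, ∀ m : ℕ, n ≤ m → () ∉ f m := by
  constructor
  · rintro ⟨c, n, h⟩; exact ⟨n, fun m hm => by cases c; exact h m hm⟩
  · rintro ⟨n, h⟩; exact ⟨(), n, h⟩

lemma unitSet_eq_empty {X : Set Unit} (h : () ∉ X) : X = ∅ := by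
  ext x; cases x; simp [h]

lemma notMem_union_unit {X Y : Set Unit} :
    () ∉ X ∪ Y ↔ () ∉ X ∧ () ∉ Y := by simp [not_or]

end S11Aux
section S11Aux2

open Automaton

variable {A Γ : Type}

lemma AutTrans.ext' {Q : Type} {t t' : AutTrans Q A Γ} (h1 : t.src = t'.src)
    (h2 : t.lab = t'.lab) (h3 : t.out = t'.out) (h4 : t.dst = t'.dst) : t = t' := by
  cases t; cases t'; cases h1; cases h2; cases h3; cases h4; rfl

/-- A finite path of an automaton, as a list of transitions. -/
inductive IsPathList (M : Automaton A Γ) : M.Q → List (AutTrans M.Q A Γ) → M.Q → Prop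
  | nil (q : M.Q) : IsPathList M q [] q
  | cons {q r : M.Q} {l : List (AutTrans M.Q A Γ)} (t : AutTrans M.Q A Γ)
      (ht : t ∈ M.delta) (hs : t.src = q) (h : IsPathList M t.dst l r) :
      IsPathList M q (t :: l) r

namespace IsPathList

lemma append {M : Automaton A Γ} {p q r : M.Q} {l l' : List (AutTrans M.Q A Γ)}
    (h : IsPathList M p l q) (h' : IsPathList M q l' r) : IsPathList M p (l ++ l') r := by
  induction h with
  | nil => simpa
  | cons t ht hs h ih => exact .cons t ht hs (ih h')

lemma mem_delta {M : Automaton A Γ} {p q : M.Q} {l : List (AutTrans M.Q A Γ)}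
    (h : IsPathList M p l q) : ∀ t ∈ l, t ∈ M.delta := by
  induction h with
  | nil => simp
  | cons t ht hs h ih => intro t' ht'; rcases List.mem_cons.1 ht' with rfl | ht' <;>
      [exact ht; exact ih t' ht']

lemma head_src {M : Automaton A Γ} {p q : M.Q} {l : List (AutTrans M.Q A Γ)}
    (h : IsPathList M p l q) (hl : 0 < l.length) : (l[0]'hl).src = p := by
  cases h with
  | nil => simp at hl
  | cons t ht hs h => simpa using hs

lemma chain {M : Automaton A Γ} {p q : M.Q} {l : List (AutTrans M.Q A Γ)}
    (h : IsPathList M p l q) : ∀ (i : ℕ) (hi : i + 1 < l.length),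
      (l[i]'(by omega)).dst = (l[i+1]'hi).src := by
  induction h with
  | nil => intro i hi; simp at hi
  | cons t ht hs h ih =>
    intro i hi
    match i with
    | 0 =>
      simp only [List.getElem_cons_zero, List.getElem_cons_succ]
      exact (h.head_src (by simpa using hi)).symm
    | i + 1 =>
      simp only [List.getElem_cons_succ]
      exact ih i (by simpa using hi)

lemma last_dst {M : Automaton A Γ} {p q : M.Q} {l : List (AutTrans M.Q A Γ)}
    (h : IsPathList M p l q) (hl : 0 < l.length) : (l[l.length - 1]'(by omega)).dst = q := by
  induction h with
  | nil => simp at hl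
  | cons t ht hs h ih =>
    rename_i q' r' l'
    match hl' : l' with
    | [] => cases h; simp
    | t' :: l'' =>
      have := ih (by simp)
      simpa using this

lemma reach {M : Automaton A Γ} {p q : M.Q} {l : List (AutTrans M.Q A Γ)}
    (h : IsPathList M p l q) : M.Reach p q := by
  induction h with
  | nil => exact Relation.ReflTransGen.refl
  | cons t ht hs h ih => exact Relation.ReflTransGen.head ⟨t, ht, hs, rfl⟩ ih

end IsPathList

variable {C : Type}

/-- The union of colours output along a list of transitions. -/
def outsUnion {Q : Type} (l : List (AutTrans Q A (Set C))) : Set C :=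
  l.foldr (fun t X => t.out ∪ X) ∅

@[simp] lemma outsUnion_nil {Q : Type} : outsUnion ([] : List (AutTrans Q A (Set C))) = ∅ := rfl

@[simp] lemma outsUnion_cons {Q : Type} (t : AutTrans Q A (Set C))
    (l : List (AutTrans Q A (Set C))) : outsUnion (t :: l) = t.out ∪ outsUnion l := rfl

lemma outsUnion_mem_subset {Q : Type} {t : AutTrans Q A (Set C)}
    {l : List (AutTrans Q A (Set C))} (h : t ∈ l) : t.out ⊆ outsUnion l := by
  induction l with
  | nil => simp at h
  | cons t' l ih =>
    rcases List.mem_cons.1 h with rfl | h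
    · exact fun c hc => Set.mem_union_left _ hc
    · exact fun c hc => Set.mem_union_right _ (ih h hc)

lemma pathCol_iff_list {M : Automaton A (Set C)} {q p : M.Q} {w : List A} {X : Set C} :
    PathCol M q w X p ↔
      ∃ l, IsPathList M q l p ∧ l.map (·.lab) = w ∧ outsUnion l = X := by
  constructor
  · intro h
    induction h with
    | nil q => exact ⟨[], .nil q, rfl, rfl⟩
    | cons t ht hsrc hlab htail ih =>
      obtain ⟨l, hl, hlab', hout⟩ := ih
      subst hsrc hlab
      exact ⟨t :: l, .cons t ht rfl hl, by simp [hlab'], by simp [hout]⟩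
  · rintro ⟨l, hl, rfl, rfl⟩
    induction hl with
    | nil q => exact .nil q
    | cons t ht hs h ih =>
      subst hs
      simpa using PathCol.cons t ht rfl rfl ih

lemma IsPathList.pathCol {M : Automaton A (Set C)} {q p : M.Q}
    {l : List (AutTrans M.Q A (Set C))} (h : IsPathList M q l p) :
    PathCol M q (l.map (·.lab)) (outsUnion l) p :=
  pathCol_iff_list.2 ⟨l, h, rfl, rfl⟩

lemma PathCol.append {M : Automaton A (Set C)} {q r p : M.Q} {u v : List A} {X Y : Set C}
    (h : PathCol M q u X r) (h' : PathCol M r v Y p) : PathCol M q (u ++ v) (X ∪ Y) p := by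
  induction h with
  | nil q => simpa using h'
  | cons t ht hsrc hlab htail ih =>
    have := PathCol.cons t ht hsrc hlab (ih h')
    simpa [Set.union_assoc] using this

lemma PathCol.split {M : Automaton A (Set C)} {q p : M.Q} {u v : List A} {X : Set C}
    (h : PathCol M q (u ++ v) X p) :
    ∃ r X₁ X₂, PathCol M q u X₁ r ∧ PathCol M r v X₂ p ∧ X = X₁ ∪ X₂ := by
  induction u generalizing q X with
  | nil =>
    exact ⟨q, ∅, X, .nil q, by simpa using h, by simp⟩
  | cons a u ih =>
    rw [List.cons_append] at h
    cases h with
    | cons t ht hsrc hlab htail =>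
      obtain ⟨r, X₁, X₂, h1, h2, rfl⟩ := ih htail
      exact ⟨r, t.out ∪ X₁, X₂, .cons t ht hsrc hlab h1, h2, by simp [Set.union_assoc]⟩

lemma PathCol.reach {M : Automaton A (Set C)} {q p : M.Q} {u : List A} {X : Set C}
    (h : PathCol M q u X p) : M.Reach q p := by
  obtain ⟨l, hl, -, -⟩ := pathCol_iff_list.1 h
  exact hl.reach

lemma reach_iff_pathCol {M : Automaton A (Set C)} {q p : M.Q} :
    M.Reach q p ↔ ∃ u X, PathCol M q u X p := by
  constructor
  · intro h
    induction h with
    | refl => exact ⟨[], ∅, .nil q⟩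
    | tail hr hstep ih =>
      obtain ⟨u, X, hu⟩ := ih
      obtain ⟨t, ht, hsrc, hdst⟩ := hstep
      refine ⟨u ++ [t.lab], X ∪ (t.out ∪ ∅), hu.append ?_⟩
      rw [← hdst]
      exact PathCol.cons t ht hsrc rfl (.nil t.dst)
  · rintro ⟨u, X, h⟩; exact h.reach

lemma pathCol_nil_inv {M : Automaton A (Set C)} {q p : M.Q} {X : Set C}
    (h : PathCol M q [] X p) : p = q ∧ X = ∅ := by
  cases h; exact ⟨rfl, rfl⟩

lemma pathCol_cons_inv {M : Automaton A (Set C)} {q p : M.Q} {a : A} {u : List A} {X : Set C}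
    (h : PathCol M q (a :: u) X p) :
    ∃ t ∈ M.delta, t.src = q ∧ t.lab = a ∧ ∃ Y, PathCol M t.dst u Y p ∧ X = t.out ∪ Y := by
  cases h with
  | cons t ht hsrc hlab htail => exact ⟨t, ht, hsrc, hlab, _, htail, rfl⟩

end S11Aux2
section S11Aux3

open Automaton

variable {A : Type} {C : Type}

lemma union_eq_empty' {X Y : Set C} (h : X ∪ Y = ∅) : X = ∅ ∧ Y = ∅ :=
  ⟨Set.eq_empty_of_subset_empty (h ▸ Set.subset_union_left),
   Set.eq_empty_of_subset_empty (h ▸ Set.subset_union_right)⟩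

lemma mem_outsUnion {Q : Type} {c : C} {l : List (AutTrans Q A (Set C))} :
    c ∈ outsUnion l ↔ ∃ t ∈ l, c ∈ t.out := by
  induction l with
  | nil => simp
  | cons t l ih => simp [ih]

variable {M : Automaton A (Set Unit)}

lemma runFrom_shift {q : M.Q} {w : ℕ → A} {ρ : ℕ → AutTrans M.Q A (Set Unit)}
    (h : M.IsRunFrom q w ρ) (k : ℕ) :
    M.IsRunFrom ((ρ k).src) (fun n => w (k + n)) (fun n => ρ (k + n)) := by
  obtain ⟨h0, h1⟩ := h
  exact ⟨rfl, fun n => (h1 (k + n))⟩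

lemma genCoBuchi_unit_shift {f : ℕ → Set Unit} (h : f ∈ genCoBuchi Unit) (k : ℕ) :
    (fun n => f (k + n)) ∈ genCoBuchi Unit := by
  rw [mem_genCoBuchi_unit] at h ⊢
  obtain ⟨n₀, h⟩ := h
  exact ⟨n₀, fun m hm => h (k + m) (by omega)⟩

/-- Prepend one transition to a run. -/
lemma run_cons {t : AutTrans M.Q A (Set Unit)} (ht : t ∈ M.delta) {w : ℕ → A}
    {ρ : ℕ → AutTrans M.Q A (Set Unit)} (h : M.IsRunFrom t.dst w ρ) :
    M.IsRunFrom t.src (wordAppend [t.lab] w)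
      (fun n => Nat.casesOn n t (fun m => ρ m)) := by
  obtain ⟨h0, h1⟩ := h
  refine ⟨rfl, fun n => ?_⟩
  match n with
  | 0 =>
    refine ⟨ht, ?_, h0.symm⟩
    rw [wordAppend_lt _ _ _ (by simp)]; rfl
  | n + 1 =>
    obtain ⟨ha, hb, hc⟩ := h1 n
    exact ⟨ha, by rw [wordAppend_ge _ _ _ (by simp)]; simpa using hb, hc⟩

lemma safeLang_subset_langFrom (hacc : M.acc = genCoBuchi Unit) (q : M.Q) :
    M.SafeLang q ⊆ M.LangFrom q := by
  rintro w ⟨ρ, hρ, hsafe⟩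
  exact ⟨ρ, hρ, by rw [hacc, mem_genCoBuchi_unit]; exact ⟨0, fun m _ => hsafe m⟩⟩

lemma langFrom_step (hacc : M.acc = genCoBuchi Unit) (hsd : M.SemanticallyDeterministic)
    {t : AutTrans M.Q A (Set Unit)} (ht : t ∈ M.delta) :
    M.LangFrom t.dst = residualLang [t.lab] (M.LangFrom t.src) := by
  ext w
  constructor
  · rintro ⟨ρ, hρ, haccw⟩
    refine ⟨fun n => Nat.casesOn n t (fun m => ρ m), run_cons ht hρ, ?_⟩
    rw [hacc, mem_genCoBuchi_unit] at haccw ⊢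
    obtain ⟨n₀, hn₀⟩ := haccw
    refine ⟨n₀ + 1, fun m hm => ?_⟩
    match m with
    | m + 1 => exact hn₀ m (by omega)
  · rintro ⟨ρ, hρ, haccw⟩
    obtain ⟨h0, h1⟩ := hρ
    obtain ⟨hd, hlab, hdst⟩ := h1 0
    have hw0 : (ρ 0).lab = t.lab := by
      rw [hlab, wordAppend_lt _ _ _ (by simp)]; rfl
    have hL : M.LangFrom (ρ 0).dst = M.LangFrom t.dst :=
      hsd _ hd _ ht h0 hw0
    rw [← hL, hdst]
    have hsh := runFrom_shift (M := M) ⟨h0, h1⟩ 1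
    refine ⟨fun n => ρ (1 + n), ?_, ?_⟩
    · have : (fun n => wordAppend [t.lab] w (1 + n)) = w := by
        funext n; rw [wordAppend_ge _ _ _ (by simp)]; congr 1; simp
      rwa [this] at hsh
    · rw [hacc]
      exact genCoBuchi_unit_shift (by rwa [hacc] at haccw) 1

lemma pathCol_residual (hacc : M.acc = genCoBuchi Unit) (hsd : M.SemanticallyDeterministic)
    {q p : M.Q} {u : List A} {X : Set Unit} (h : PathCol M q u X p) :
    M.LangFrom p = residualLang u (M.LangFrom q) := by
  induction h with
  | nil q => simp
  | cons t ht hsrc hlab htail ih =>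
    rw [ih, langFrom_step hacc hsd ht, ← residualLang_append, hsrc, hlab]
    rfl

/-- Prepend a safe finite path to a safe word. -/
lemma safeLang_prepend {q p : M.Q} {u : List A} {X : Set Unit} (h : PathCol M q u X p)
    (hX : () ∉ X) {w : ℕ → A} (hw : w ∈ M.SafeLang p) : wordAppend u w ∈ M.SafeLang q := by
  induction h with
  | nil q => simpa using hw
  | cons t ht hsrc hlab htail ih =>
    rw [notMem_union_unit] at hX
    obtain ⟨ρ, hρ, hsafe⟩ := ih hX.2 hw
    subst hsrc hlab
    have hrc := run_cons ht hρ
    refine ⟨_, by rw [← List.singleton_append, wordAppend_append]; exact hrc, ?_⟩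
    intro n
    match n with
    | 0 => exact hX.1
    | n + 1 => exact hsafe n

/-- Prepend a finite path to an accepted word. -/
lemma langFrom_prepend (hacc : M.acc = genCoBuchi Unit) {q p : M.Q} {u : List A}
    {X : Set Unit} (h : PathCol M q u X p) {w : ℕ → A} (hw : w ∈ M.LangFrom p) :
    wordAppend u w ∈ M.LangFrom q := by
  induction h with
  | nil q => simpa using hw
  | cons t ht hsrc hlab htail ih =>
    obtain ⟨ρ, hρ, hac⟩ := ih hw
    subst hsrc hlab
    have hrc := run_cons ht hρ
    refine ⟨_, by rw [← List.singleton_append, wordAppend_append]; exact hrc, ?_⟩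
    rw [hacc, mem_genCoBuchi_unit] at hac ⊢
    obtain ⟨n₀, hn₀⟩ := hac
    refine ⟨n₀ + 1, fun m hm => ?_⟩
    match m with
    | m + 1 => exact hn₀ m (by omega)

lemma run_segment {q : M.Q} {w : ℕ → A} {ρ : ℕ → AutTrans M.Q A (Set Unit)}
    (h : M.IsRunFrom q w ρ) (n k : ℕ) :
    ∃ l, IsPathList M ((ρ n).src) l ((ρ (n + k)).src) ∧
      l.map (·.lab) = List.ofFn (fun i : Fin k => w (n + i)) ∧
      ∀ t ∈ l, ∃ i, n ≤ i ∧ i < n + k ∧ t = ρ i := by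
  induction k with
  | zero => exact ⟨[], .nil _, by simp, by simp⟩
  | succ k ih =>
    obtain ⟨l, hl, hlab, hmem⟩ := ih
    obtain ⟨hd, hlabk, hdst⟩ := h.2 (n + k)
    refine ⟨l ++ [ρ (n + k)], ?_, ?_, ?_⟩
    · refine hl.append ?_
      have : IsPathList M ((ρ (n+k)).src) [ρ (n+k)] ((ρ (n+k)).dst) :=
        .cons _ hd rfl (.nil _)
      rw [hdst] at this; exact this
    · rw [List.map_append, hlab, List.ofFn_succ', List.concat_eq_append]
      simp [hlabk]
    · intro t ht
      rcases List.mem_append.1 ht with ht | ht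
      · obtain ⟨i, h1, h2, h3⟩ := hmem t ht; exact ⟨i, h1, by omega, h3⟩
      · exact ⟨n + k, by omega, by omega, by simpa using ht⟩

lemma run_state_pathCol {q : M.Q} {w : ℕ → A} {ρ : ℕ → AutTrans M.Q A (Set Unit)}
    (h : M.IsRunFrom q w ρ) (n : ℕ) :
    ∃ X, PathCol M q (listPrefix w n) X ((ρ n).src) ∧
      ∀ c ∈ X, ∃ i, i < n ∧ c ∈ (ρ i).out := by
  obtain ⟨l, hl, hlab, hmem⟩ := run_segment h 0 n
  rw [h.1] at hl
  refine ⟨outsUnion l, ?_, ?_⟩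
  · have := hl.pathCol
    rw [hlab] at this
    have heq : (List.ofFn fun i : Fin n => w (0 + i)) = listPrefix w n := by
      simp [listPrefix]
    rwa [show (0 : ℕ) + n = n from by omega, heq] at this
  · intro c hc
    obtain ⟨t, htl, hct⟩ := mem_outsUnion.1 hc
    obtain ⟨i, -, h2, rfl⟩ := hmem t htl
    exact ⟨i, by omega, hct⟩

lemma run_state_residual (hacc : M.acc = genCoBuchi Unit) (hsd : M.SemanticallyDeterministic)
    {q : M.Q} {w : ℕ → A} {ρ : ℕ → AutTrans M.Q A (Set Unit)}
    (h : M.IsRunFrom q w ρ) (n : ℕ) :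
    M.LangFrom ((ρ n).src) = residualLang (listPrefix w n) (M.LangFrom q) := by
  obtain ⟨X, hX, -⟩ := run_state_pathCol h n
  exact pathCol_residual hacc hsd hX

/-- From a safe word, extract safe finite path on each prefix. -/
lemma safeLang_prefix_pathCol {q : M.Q} {w : ℕ → A} (hw : w ∈ M.SafeLang q) (n : ℕ) :
    ∃ p, PathCol M q (listPrefix w n) ∅ p := by
  obtain ⟨ρ, hρ, hsafe⟩ := hw
  obtain ⟨X, hX, hXc⟩ := run_state_pathCol hρ n
  have : X = ∅ := by
    apply unitSet_eq_empty
    intro hc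
    obtain ⟨i, -, hci⟩ := hXc () hc
    exact hsafe i hci
  exact ⟨_, this ▸ hX⟩

lemma safe_pathCol_unique (hsdet : M.SafeDeterministic) {q p p' : M.Q} {u : List A}
    (h : PathCol M q u ∅ p) (h' : PathCol M q u ∅ p') : p = p' := by
  induction u generalizing q with
  | nil => rw [(pathCol_nil_inv h).1, (pathCol_nil_inv h').1]
  | cons a u ih =>
    obtain ⟨t, ht, hsrc, hlab, Y, hY, hXY⟩ := pathCol_cons_inv h
    obtain ⟨t', ht', hsrc', hlab', Y', hY', hXY'⟩ := pathCol_cons_inv h'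
    obtain ⟨ho, hYe⟩ := union_eq_empty' hXY.symm
    obtain ⟨ho', hYe'⟩ := union_eq_empty' hXY'.symm
    have : t = t' := hsdet t ht t' ht' (by simp [ho]) (by simp [ho'])
      (hsrc.trans hsrc'.symm) (hlab.trans hlab'.symm)
    subst this
    exact ih (hYe ▸ hY) (hYe' ▸ hY')

lemma SafeConn.refl' (q : M.Q) : M.SafeConn q q :=
  ⟨Relation.ReflTransGen.refl, Relation.ReflTransGen.refl⟩

lemma SafeConn.symm' {q p : M.Q} (h : M.SafeConn q p) : M.SafeConn p q := ⟨h.2, h.1⟩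

lemma SafeConn.trans' {q p r : M.Q} (h : M.SafeConn q p) (h' : M.SafeConn p r) :
    M.SafeConn q r := ⟨h.1.trans h'.1, h'.2.trans h.2⟩

lemma safe_pathCol_safeConn (hnf : M.NormalForm) {q p : M.Q} {u : List A} {X : Set Unit}
    (h : PathCol M q u X p) (hX : () ∉ X) : M.SafeConn q p := by
  induction h with
  | nil q => exact SafeConn.refl' q
  | cons t ht hsrc hlab htail ih =>
    rw [notMem_union_unit] at hX
    exact SafeConn.trans' (hsrc ▸ hnf t ht hX.1) (ih hX.2)

lemma safeConn_pathCol {q p : M.Q} (h : Relation.ReflTransGen M.SafeStep q p) :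
    ∃ u, PathCol M q u ∅ p := by
  induction h with
  | refl => exact ⟨[], .nil q⟩
  | tail hr hstep ih =>
    obtain ⟨u, hu⟩ := ih
    obtain ⟨t, ht, hsrc, hdst, hout⟩ := hstep
    refine ⟨u ++ [t.lab], ?_⟩
    have h2 : PathCol M t.src [t.lab] (t.out ∪ ∅) t.dst := .cons t ht rfl rfl (.nil _)
    rw [unitSet_eq_empty hout] at h2
    have := hu.append (hsrc ▸ hdst ▸ h2)
    simpa using this

/-- If every finite prefix of `w` can be read safely from `q`, then `w ∈ SafeLang q`. -/
lemma safeLang_of_prefixes (hsdet : M.SafeDeterministic) {q : M.Q} {w : ℕ → A}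
    (h : ∀ n, ∃ p, PathCol M q (listPrefix w n) ∅ p) : w ∈ M.SafeLang q := by
  classical
  choose x hx using h
  have step : ∀ n, ∃ t ∈ M.delta, t.src = x n ∧ t.lab = w n ∧ t.dst = x (n + 1) ∧ t.out = ∅ := by
    intro n
    have h1 := hx (n + 1)
    rw [listPrefix_succ] at h1
    obtain ⟨r, X₁, X₂, hr1, hr2, hXu⟩ := h1.split
    obtain ⟨hX₁, hX₂⟩ := union_eq_empty' hXu.symm
    subst hX₁ hX₂
    have : r = x n := safe_pathCol_unique hsdet hr1 (hx n)
    subst this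
    obtain ⟨t, ht, hsrc, hlab, Y, hY, hXY⟩ := pathCol_cons_inv hr2
    obtain ⟨ho, hYe⟩ := union_eq_empty' hXY.symm
    subst hYe
    obtain ⟨hpq, -⟩ := pathCol_nil_inv hY
    exact ⟨t, ht, hsrc, hlab, hpq ▸ rfl, ho⟩
  choose t htd hts htl htdst hto using step
  have hx0 : x 0 = q := by
    have := hx 0
    rw [listPrefix_zero] at this
    exact (pathCol_nil_inv this).1
  refine ⟨t, ⟨by rw [hts 0, hx0], fun n => ⟨htd n, htl n, by rw [htdst n, hts (n+1)]⟩⟩, ?_⟩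
  intro n
  rw [hto n]
  exact fun h => h

end S11Aux3
section S11Aux4

open Automaton

variable {A : Type}

@[simp] lemma flattenPrefix_zero (u : ℕ → List A) : flattenPrefix u 0 = [] := by
  simp [flattenPrefix]

lemma flattenPrefix_succ (u : ℕ → List A) (k : ℕ) :
    flattenPrefix u (k + 1) = flattenPrefix u k ++ u k := by
  unfold flattenPrefix
  rw [List.ofFn_succ', List.concat_eq_append, List.flatten_append]
  simp

@[simp] lemma flattenPrefix_one (u : ℕ → List A) : flattenPrefix u 1 = u 0 := by
  rw [flattenPrefix_succ]; simp

lemma flattenPrefix_prefix (u : ℕ → List A) {k m : ℕ} (h : k ≤ m) :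
    flattenPrefix u k <+: flattenPrefix u m := by
  induction m with
  | zero => rw [Nat.le_zero.1 h]
  | succ m ih =>
    rcases Nat.lt_or_ge k (m + 1) with h' | h'
    · rw [flattenPrefix_succ]
      exact (ih (by omega)).trans (List.prefix_append _ _)
    · have : k = m + 1 := by omega
      rw [this]

lemma flattenPrefix_len {u : ℕ → List A} (hu : ∀ k, u k ≠ []) (k : ℕ) :
    k ≤ (flattenPrefix u k).length := by
  induction k with
  | zero => simp
  | succ k ih =>
    rw [flattenPrefix_succ, List.length_append]
    have : 0 < (u k).length := List.length_pos_iff.2 (hu k)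
    omega

lemma flattenPrefix_add (u : ℕ → List A) (a b : ℕ) :
    flattenPrefix u (a + b) = flattenPrefix u a ++ flattenPrefix (fun i => u (a + i)) b := by
  induction b with
  | zero => simp
  | succ b ih =>
    rw [show a + (b+1) = (a+b)+1 from rfl, flattenPrefix_succ, ih, flattenPrefix_succ,
      List.append_assoc]

/-- The infinite word obtained by concatenating the nonempty finite words `u k`. -/
noncomputable def flatWord (u : ℕ → List A) (hu : ∀ k, u k ≠ []) (n : ℕ) : A :=
  (flattenPrefix u (n + 1))[n]'(lt_of_lt_of_le n.lt_succ_self (flattenPrefix_len hu (n + 1)))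

lemma flatWord_eq_get {u : ℕ → List A} (hu : ∀ k, u k ≠ []) {k n : ℕ}
    (h : n < (flattenPrefix u k).length) : flatWord u hu n = (flattenPrefix u k)[n] := by
  rcases le_total k (n + 1) with hk | hk
  · exact ((flattenPrefix_prefix u hk).getElem h).symm
  · exact (flattenPrefix_prefix u hk).getElem _

lemma listPrefix_flatWord {u : ℕ → List A} (hu : ∀ k, u k ≠ []) (k : ℕ) :
    listPrefix (flatWord u hu) ((flattenPrefix u k).length) = flattenPrefix u k := by
  apply List.ext_getElem (by simp)
  intro i h1 h2
  rw [listPrefix_getElem _ _ _ h1, flatWord_eq_get hu h2]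

lemma flatWord_block {u : ℕ → List A} (hu : ∀ k, u k ≠ []) (k i : ℕ) (h : i < (u k).length) :
    flatWord u hu ((flattenPrefix u k).length + i) = (u k)[i] := by
  have hlen : (flattenPrefix u k).length + i < (flattenPrefix u (k+1)).length := by
    rw [flattenPrefix_succ, List.length_append]; omega
  rw [flatWord_eq_get hu hlen, List.getElem_of_eq (flattenPrefix_succ u k) hlen,
    List.getElem_append_right (by omega)]
  congr 1
  omega

lemma ofFn_flatWord_block {u : ℕ → List A} (hu : ∀ k, u k ≠ []) (k : ℕ) :
    (List.ofFn fun i : Fin (u k).length =>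
      flatWord u hu ((flattenPrefix u k).length + i)) = u k := by
  apply List.ext_getElem (by simp)
  intro i h1 h2
  rw [List.getElem_ofFn]
  exact flatWord_block hu k i (by simpa using h2)

lemma exists_block {u : ℕ → List A} (hu : ∀ k, u k ≠ []) (n : ℕ) :
    ∃ k i, i < (u k).length ∧ (flattenPrefix u k).length + i = n := by
  classical
  have hex : ∃ m, ¬ (flattenPrefix u m).length ≤ n :=
    ⟨n + 1, by have := flattenPrefix_len hu (n + 1); omega⟩
  have hspec := Nat.find_spec hex
  have hpos : Nat.find hex ≠ 0 := by
    intro h; rw [h] at hspec; simp at hspec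
  obtain ⟨k, hk⟩ : ∃ k, Nat.find hex = k + 1 := ⟨Nat.find hex - 1, by omega⟩
  have h1 : (flattenPrefix u k).length ≤ n := by
    by_contra h
    have := Nat.find_min' hex h
    omega
  rw [hk, flattenPrefix_succ, List.length_append] at hspec
  exact ⟨k, n - (flattenPrefix u k).length, by omega, by omega⟩

variable {Γ : Type}

lemma chainAll {M : Automaton A Γ} {z : ℕ → M.Q} {l : ℕ → List (AutTrans M.Q A Γ)}
    (hchain : ∀ k, IsPathList M (z k) (l k) (z (k + 1))) (k : ℕ) :
    IsPathList M (z 0) (flattenPrefix l k) (z k) := by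
  induction k with
  | zero => exact .nil _
  | succ k ih => rw [flattenPrefix_succ]; exact ih.append (hchain k)

lemma glue_run {M : Automaton A Γ} {z : ℕ → M.Q} {l : ℕ → List (AutTrans M.Q A Γ)}
    (hl : ∀ k, l k ≠ []) (hchain : ∀ k, IsPathList M (z k) (l k) (z (k + 1))) :
    M.IsRunFrom (z 0) (fun n => (flatWord l hl n).lab) (flatWord l hl) ∧
    (∀ K n, (flattenPrefix l K).length ≤ n → ∃ k, K ≤ k ∧ flatWord l hl n ∈ l k) ∧
    (∀ K, listPrefix (fun n => (flatWord l hl n).lab) ((flattenPrefix l K).length)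
        = (flattenPrefix l K).map (·.lab)) := by
  refine ⟨⟨?_, fun n => ⟨?_, rfl, ?_⟩⟩, ?_, ?_⟩
  · have h1 := (chainAll hchain 1).head_src
      (by simpa using List.length_pos_iff.2 (hl 0))
    have : flatWord l hl 0 = (flattenPrefix l 1)[0]'(by simpa using List.length_pos_iff.2 (hl 0)) :=
      flatWord_eq_get hl _
    rw [this, h1]
  · -- membership in delta
    have hmem : flatWord l hl n ∈ flattenPrefix l (n + 1) := by
      rw [flatWord_eq_get hl (lt_of_lt_of_le n.lt_succ_self (flattenPrefix_len hl (n + 1)))]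
      exact List.getElem_mem _
    exact (chainAll hchain (n + 1)).mem_delta _ hmem
  · -- dst chain
    have hlen : n + 1 < (flattenPrefix l (n + 2)).length :=
      lt_of_lt_of_le (by omega) (flattenPrefix_len hl (n + 2))
    have e1 : flatWord l hl n = (flattenPrefix l (n+2))[n]'(by omega) := flatWord_eq_get hl _
    have e2 : flatWord l hl (n+1) = (flattenPrefix l (n+2))[n+1]'hlen := flatWord_eq_get hl _
    rw [e1, e2]
    exact (chainAll hchain (n + 2)).chain n hlen
  · -- refined membership
    intro K n hKn
    have hKn1 : K ≤ n + 1 := by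
      have := flattenPrefix_len hl K; omega
    have hsplit := flattenPrefix_add l K ((n + 1) - K)
    rw [show K + ((n+1) - K) = n + 1 from by omega] at hsplit
    have hlen : n < (flattenPrefix l (n+1)).length :=
      lt_of_lt_of_le n.lt_succ_self (flattenPrefix_len hl (n + 1))
    have e1 : flatWord l hl n = (flattenPrefix l (n+1))[n]'hlen := flatWord_eq_get hl _
    have e2 := List.getElem_of_eq hsplit hlen
    have hmem : flatWord l hl n ∈ flattenPrefix (fun i => l (K + i)) ((n+1) - K) := by
      rw [e1, e2, List.getElem_append_right hKn]
      exact List.getElem_mem _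
    rw [flattenPrefix] at hmem
    obtain ⟨blk, hblk, hmem2⟩ := List.mem_flatten.1 hmem
    obtain ⟨i, hi⟩ := List.mem_ofFn.1 hblk
    exact ⟨K + i, by omega, by rw [show l (K + ↑i) = blk from hi]; exact hmem2⟩
  · -- label prefix
    intro K
    apply List.ext_getElem (by simp)
    intro i h1 h2
    rw [listPrefix_getElem _ _ _ h1, List.getElem_map]
    congr 1
    exact flatWord_eq_get hl (by simpa using h2)

end S11Aux4
section S11Aux5

open Automaton

variable {A : Type} {R : Set (ℕ → A)}

lemma localAlphabet_ne_nil {v : List A} (h : v ∈ localAlphabet R) : v ≠ [] := h.1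

lemma localAlphabet_residual {v : List A} (h : v ∈ localAlphabet R) :
    residualLang v R = R := h.2.1

lemma exists_localLetter {u : List A} (hu1 : u ≠ []) (hu2 : residualLang u R = R) :
    ∃ k, 0 < k ∧ k ≤ u.length ∧ u.take k ∈ localAlphabet R ∧
      residualLang (u.drop k) R = R := by
  classical
  have hex : ∃ j, 0 < j ∧ residualLang (u.take j) R = R :=
    ⟨u.length, List.length_pos_iff.2 hu1, by rwa [List.take_length]⟩
  obtain ⟨hkpos, hkres⟩ := Nat.find_spec hex
  set k := Nat.find hex with hkdef
  have hkle : k ≤ u.length := Nat.find_le ⟨List.length_pos_iff.2 hu1, by rwa [List.take_length]⟩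
  have htake_len : (u.take k).length = k := by
    rw [List.length_take]; omega
  refine ⟨k, hkpos, hkle, ⟨?_, hkres, ?_⟩, ?_⟩
  · intro h
    rw [← List.length_pos_iff] at hu1
    have := congrArg List.length h
    rw [htake_len] at this
    simp at this; omega
  · intro v' hpre hne hneq
    intro hres
    have hlen : v'.length ≤ k := by
      have := hpre.length_le
      rwa [htake_len] at this
    have hlt : v'.length < k := by
      rcases Nat.lt_or_ge v'.length k with h | h
      · exact h
      · exfalso; exact hneq (hpre.eq_of_length (by omega))
    have hv' : v' = u.take v'.length :=
      List.prefix_iff_eq_take.1 (hpre.trans (List.take_prefix k u))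
    have hpos : 0 < v'.length := List.length_pos_iff.2 hne
    exact Nat.find_min hex hlt ⟨hpos, by rwa [← hv']⟩
  · have : u = u.take k ++ u.drop k := (List.take_append_drop k u).symm
    rw [this, residualLang_append, hkres] at hu2
    exact hu2

lemma localAlphabet_nonempty {u : List A} (hu1 : u ≠ []) (hu2 : residualLang u R = R) :
    (localAlphabet R).Nonempty := by
  obtain ⟨k, -, -, h, -⟩ := exists_localLetter hu1 hu2
  exact ⟨_, h⟩

lemma decomp_blocks {u : List A} (h : residualLang u R = R) :
    ∃ bl : List (localAlphabet R), (bl.map (fun v => v.1)).flatten = u := by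
  generalize hn : u.length = n
  induction n using Nat.strong_induction_on generalizing u with
  | _ n ih =>
    rcases eq_or_ne u [] with rfl | hne
    · exact ⟨[], rfl⟩
    · obtain ⟨k, hk0, hkle, hmem, hdrop⟩ := exists_localLetter hne h
      have hlt : (u.drop k).length < n := by
        rw [List.length_drop]
        have : 0 < u.length := List.length_pos_iff.2 hne
        omega
      obtain ⟨bl, hbl⟩ := ih _ hlt hdrop rfl
      refine ⟨⟨u.take k, hmem⟩ :: bl, ?_⟩
      simp only [List.map_cons, List.flatten_cons, hbl]
      exact List.take_append_drop k u

lemma flatten_blocks_residual (bl : List (localAlphabet R)) :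
    residualLang ((bl.map (fun v => v.1)).flatten) R = R := by
  induction bl with
  | nil => simp
  | cons v bl ih =>
    simp only [List.map_cons, List.flatten_cons]
    rw [residualLang_append, localAlphabet_residual v.2, ih]

variable {M : Automaton A (Set Unit)}

lemma mem_localAut_delta (q0 : {q : M.Q // M.LangFrom q = R})
    (t : AutTrans {q : M.Q // M.LangFrom q = R} (localAlphabet R) (Set Unit)) :
    t ∈ (localAut M R q0).delta ↔ PathCol M t.src.1 t.lab.1 t.out t.dst.1 := Iff.rfl

/-- An `M`-path whose label is a concatenation of local letters yields a path in the
localisation (version for plain reachability). -/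
lemma mPath_to_nReach (hacc : M.acc = genCoBuchi Unit) (hsd : M.SemanticallyDeterministic)
    (q0 : {q : M.Q // M.LangFrom q = R}) (bl : List (localAlphabet R)) :
    ∀ {q p : M.Q} (hq : M.LangFrom q = R) (hp : M.LangFrom p = R) {X : Set Unit},
    PathCol M q ((bl.map (fun v => v.1)).flatten) X p →
    Relation.ReflTransGen
      (fun x y : (localAut M R q0).Q =>
        ∃ t ∈ (localAut M R q0).delta, t.src = x ∧ t.dst = y) ⟨q, hq⟩ ⟨p, hp⟩ := by
  induction bl with
  | nil =>
    intro q p hq hp X h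
    simp only [List.map_nil, List.flatten_nil] at h
    obtain ⟨rfl, -⟩ := pathCol_nil_inv h
    exact Relation.ReflTransGen.refl
  | cons v bl ih =>
    intro q p hq hp X h
    simp only [List.map_cons, List.flatten_cons] at h
    obtain ⟨r, X₁, X₂, h1, h2, rfl⟩ := h.split
    have hr : M.LangFrom r = R := by
      rw [pathCol_residual hacc hsd h1, hq, localAlphabet_residual v.2]
    refine Relation.ReflTransGen.head ?_ (ih hr hp h2)
    exact ⟨⟨⟨q, hq⟩, v, X₁, ⟨r, hr⟩⟩, h1, rfl, rfl⟩

/-- Safe version: an `M`-safe path labelled by a concatenation of local letters yields a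
safe path in the localisation. -/
lemma mPath_to_nSafe (hacc : M.acc = genCoBuchi Unit) (hsd : M.SemanticallyDeterministic)
    (q0 : {q : M.Q // M.LangFrom q = R}) (bl : List (localAlphabet R)) :
    ∀ {q p : M.Q} (hq : M.LangFrom q = R) (hp : M.LangFrom p = R) {X : Set Unit},
    PathCol M q ((bl.map (fun v => v.1)).flatten) X p → () ∉ X →
    Relation.ReflTransGen (localAut M R q0).SafeStep ⟨q, hq⟩ ⟨p, hp⟩ := by
  induction bl with
  | nil =>
    intro q p hq hp X h hX
    simp only [List.map_nil, List.flatten_nil] at h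
    obtain ⟨rfl, -⟩ := pathCol_nil_inv h
    exact Relation.ReflTransGen.refl
  | cons v bl ih =>
    intro q p hq hp X h hX
    simp only [List.map_cons, List.flatten_cons] at h
    obtain ⟨r, X₁, X₂, h1, h2, rfl⟩ := h.split
    rw [notMem_union_unit] at hX
    have hr : M.LangFrom r = R := by
      rw [pathCol_residual hacc hsd h1, hq, localAlphabet_residual v.2]
    refine Relation.ReflTransGen.head ?_ (ih hr hp h2 hX.2)
    exact ⟨⟨⟨q, hq⟩, v, X₁, ⟨r, hr⟩⟩, h1, rfl, rfl, hX.1⟩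

/-- Safe connectivity transfers from `M` to the localisation. -/
lemma safeConn_M_to_N (hacc : M.acc = genCoBuchi Unit) (hsd : M.SemanticallyDeterministic)
    (q0 : {q : M.Q // M.LangFrom q = R}) {q p : M.Q} (hq : M.LangFrom q = R)
    (hp : M.LangFrom p = R) (h : M.SafeConn q p) :
    (localAut M R q0).SafeConn ⟨q, hq⟩ ⟨p, hp⟩ := by
  obtain ⟨h1, h2⟩ := h
  constructor
  · obtain ⟨u, hu⟩ := safeConn_pathCol h1
    have hres : residualLang u R = R := by
      have := pathCol_residual hacc hsd hu
      rw [hq, hp] at this; exact this.symm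
    obtain ⟨bl, rfl⟩ := decomp_blocks hres
    exact mPath_to_nSafe hacc hsd q0 bl hq hp hu (by simp)
  · obtain ⟨u, hu⟩ := safeConn_pathCol h2
    have hres : residualLang u R = R := by
      have := pathCol_residual hacc hsd hu
      rw [hq, hp] at this; exact this.symm
    obtain ⟨bl, rfl⟩ := decomp_blocks hres
    exact mPath_to_nSafe hacc hsd q0 bl hp hq hu (by simp)

/-- A path in the localisation yields a finite path in `M`. -/
lemma nPathList_to_m (q0 : {q : M.Q // M.LangFrom q = R})
    {s s' : (localAut M R q0).Q}
    {nl : List (AutTrans (localAut M R q0).Q (localAlphabet R) (Set Unit))}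
    (h : IsPathList (localAut M R q0) s nl s') :
    ∃ X, PathCol M s.1 ((nl.map (fun t => t.lab.1)).flatten) X s'.1 ∧
      ∀ c ∈ X, ∃ t ∈ nl, c ∈ t.out := by
  induction h with
  | nil q => exact ⟨∅, .nil _, by simp⟩
  | cons t ht hs hrest ih =>
    obtain ⟨X, hX, hXc⟩ := ih
    have hstep : PathCol M t.src.1 t.lab.1 t.out t.dst.1 := ht
    refine ⟨t.out ∪ X, ?_, ?_⟩
    · simp only [List.map_cons, List.flatten_cons]
      rw [hs] at hstep
      exact hstep.append hX
    · intro c hc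
      rcases hc with hc | hc
      · exact ⟨t, List.mem_cons_self, hc⟩
      · obtain ⟨t', ht', hc'⟩ := hXc c hc
        exact ⟨t', List.mem_cons_of_mem _ ht', hc'⟩

end S11Aux5
section S11Aux6

open Automaton

variable {A : Type} {R : Set (ℕ → A)}

/-- The sequence of blocks (as plain words) of a word over the local alphabet. -/
def blkW (W : ℕ → localAlphabet R) : ℕ → List A := fun k => (W k).1

lemma blkW_ne (W : ℕ → localAlphabet R) : ∀ k, blkW W k ≠ [] := fun k => (W k).2.1

/-- The flattening of a word over the local alphabet. -/
noncomputable def flatW (W : ℕ → localAlphabet R) : ℕ → A :=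
  flatWord (blkW W) (blkW_ne W)

lemma flatWord_congr {T : Type} {u u' : ℕ → List T} (h : u = u') (hu : ∀ k, u k ≠ [])
    (hu' : ∀ k, u' k ≠ []) : flatWord u hu = flatWord u' hu' := by subst h; rfl

lemma flattenPrefix_map {T B : Type} (u : ℕ → List T) (f : T → B) (K : ℕ) :
    flattenPrefix (fun k => (u k).map f) K = (flattenPrefix u K).map f := by
  unfold flattenPrefix
  rw [List.map_flatten, List.map_ofFn]
  rfl

lemma flatWord_map {T B : Type} (u : ℕ → List T) (hu : ∀ k, u k ≠ []) (f : T → B)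
    (hu' : ∀ k, (u k).map f ≠ []) :
    (fun n => f (flatWord u hu n)) = flatWord (fun k => (u k).map f) hu' := by
  funext n
  have h1 : n < (flattenPrefix u (n+1)).length :=
    lt_of_lt_of_le n.lt_succ_self (flattenPrefix_len hu (n + 1))
  have h2 : n < (flattenPrefix (fun k => (u k).map f) (n+1)).length := by
    rw [flattenPrefix_map]; simpa using h1
  rw [show flatWord u hu n = (flattenPrefix u (n+1))[n] from flatWord_eq_get hu h1,
    show flatWord (fun k => (u k).map f) hu' n = (flattenPrefix (fun k => (u k).map f) (n+1))[n]
      from flatWord_eq_get hu' h2]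
  rw [List.getElem_of_eq (flattenPrefix_map u f (n+1)) h2, List.getElem_map]

lemma flattenPrefix_blocks_residual (W : ℕ → localAlphabet R) (k : ℕ) :
    residualLang (flattenPrefix (blkW W) k) R = R := by
  induction k with
  | zero => simp
  | succ k ih =>
    rw [flattenPrefix_succ, residualLang_append, ih]
    exact localAlphabet_residual (W k).2

variable {M : Automaton A (Set Unit)}

/-- Characterisation of the language of the localisation. -/
lemma nLang_iff (hacc : M.acc = genCoBuchi Unit) (hsd : M.SemanticallyDeterministic)
    (q0 : {q : M.Q // M.LangFrom q = R}) (s : {q : M.Q // M.LangFrom q = R})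
    (W : ℕ → localAlphabet R) :
    W ∈ (localAut M R q0).LangFrom s ↔ flatW W ∈ R := by
  constructor
  · rintro ⟨τ, hτ, haccN⟩
    have hdelta : ∀ k, PathCol M ((τ k).src.1) ((τ k).lab.1) ((τ k).out) ((τ k).dst.1) :=
      fun k => (hτ.2 k).1
    have hml := fun k => pathCol_iff_list.1 (hdelta k)
    choose ml hml1 hml2 hml3 using hml
    have hmlne : ∀ k, ml k ≠ [] := by
      intro k h
      have := hml2 k
      rw [h] at this
      exact localAlphabet_ne_nil ((τ k).lab).2 (by simpa using this.symm)
    have hchain : ∀ k, IsPathList M (((τ k).src.1 : M.Q)) (ml k) ((τ (k+1)).src.1) := by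
      intro k
      have hd : (τ k).dst = (τ (k+1)).src := (hτ.2 k).2.2
      rw [← hd]; exact hml1 k
    obtain ⟨hrun, hmem, hpre⟩ := glue_run hmlne hchain
    have hlabeq : (fun k => (ml k).map (·.lab)) = blkW W := by
      funext k
      rw [hml2 k]
      have : (τ k).lab = W k := (hτ.2 k).2.1
      rw [this]; rfl
    have hwordeq : (fun n => (flatWord ml hmlne n).lab) = flatW W := by
      rw [flatWord_map ml hmlne (·.lab) (fun k => by rw [hml2 k]; exact localAlphabet_ne_nil ((τ k).lab).2)]
      exact flatWord_congr hlabeq _ _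
    have hsval : ((τ 0).src.1 : M.Q) = s.1 := by rw [hτ.1]
    have : flatW W ∈ M.LangFrom s.1 := by
      refine ⟨flatWord ml hmlne, ?_, ?_⟩
      · rw [← hwordeq, ← hsval]; exact hrun
      · rw [hacc, mem_genCoBuchi_unit]
        have haccN' : ∃ k₀, ∀ k, k₀ ≤ k → () ∉ (τ k).out := by
          rw [show (localAut M R q0).acc = genCoBuchi Unit from rfl,
            mem_genCoBuchi_unit] at haccN
          exact haccN
        obtain ⟨k₀, hk₀⟩ := haccN'
        refine ⟨(flattenPrefix ml k₀).length, fun m hm => ?_⟩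
        obtain ⟨k, hkk, hmemk⟩ := hmem k₀ m hm
        intro hout
        have : () ∈ outsUnion (ml k) := outsUnion_mem_subset hmemk hout
        rw [hml3 k] at this
        exact hk₀ k hkk this
    rwa [s.2] at this
  · intro hW
    have hWL : flatW W ∈ M.LangFrom s.1 := by rw [s.2]; exact hW
    obtain ⟨ρ, hρ, haccw⟩ := hWL
    set b : ℕ → ℕ := fun k => (flattenPrefix (blkW W) k).length with hb
    have hbsucc : ∀ k, b (k+1) = b k + (blkW W k).length := by
      intro k; rw [hb]; simp [flattenPrefix_succ]
    have hLk : ∀ k, M.LangFrom ((ρ (b k)).src) = R := by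
      intro k
      rw [run_state_residual hacc hsd hρ (b k)]
      have : listPrefix (flatW W) (b k) = flattenPrefix (blkW W) k :=
        listPrefix_flatWord (blkW_ne W) k
      rw [this, s.2, flattenPrefix_blocks_residual]
    have hseg := fun k => run_segment hρ (b k) ((blkW W k).length)
    choose seg hseg1 hseg2 hseg3 using hseg
    have hseglab : ∀ k, (seg k).map (·.lab) = blkW W k := by
      intro k
      rw [hseg2 k]
      have := ofFn_flatWord_block (blkW_ne W) k
      exact this
    have hsegpath : ∀ k, PathCol M ((ρ (b k)).src) (blkW W k) (outsUnion (seg k))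
        ((ρ (b (k+1))).src) := by
      intro k
      have := (hseg1 k).pathCol
      rw [hseglab k] at this
      rwa [← hbsucc k] at this
    refine ⟨fun k => ⟨⟨(ρ (b k)).src, hLk k⟩, W k, outsUnion (seg k),
      ⟨(ρ (b (k+1))).src, hLk (k+1)⟩⟩, ⟨?_, fun k => ⟨?_, rfl, rfl⟩⟩, ?_⟩
    · apply Subtype.ext
      show (ρ (b 0)).src = s.1
      have : b 0 = 0 := by rw [hb]; simp
      rw [this, hρ.1]
    · exact hsegpath k
    · rw [show (localAut M R q0).acc = genCoBuchi Unit from rfl, mem_genCoBuchi_unit]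
      rw [hacc, mem_genCoBuchi_unit] at haccw
      obtain ⟨n₀, hn₀⟩ := haccw
      refine ⟨n₀, fun k hk => ?_⟩
      intro hout
      obtain ⟨t, htk, htout⟩ := mem_outsUnion.1 (show () ∈ outsUnion (seg k) from hout)
      obtain ⟨i, hi1, -, rfl⟩ := hseg3 k t htk
      have hbk : k ≤ b k := flattenPrefix_len (blkW_ne W) k
      exact hn₀ i (by omega) htout

end S11Aux6
section S11Aux7

open Automaton

variable {A : Type} {R : Set (ℕ → A)} {M : Automaton A (Set Unit)}

/-- A safe word of the localisation gives safe readability of all its block prefixes in `M`. -/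
lemma nSafe_prefix_m (q0 : {q : M.Q // M.LangFrom q = R}) {s : {q : M.Q // M.LangFrom q = R}}
    {W : ℕ → localAlphabet R} (hW : W ∈ (localAut M R q0).SafeLang s) (K : ℕ) :
    ∃ p, PathCol M s.1 (flattenPrefix (blkW W) K) ∅ p := by
  obtain ⟨σ, hσ, hsafe⟩ := hW
  obtain ⟨nl, hnl1, hnl2, hnl3⟩ := run_segment hσ 0 K
  rw [hσ.1] at hnl1
  obtain ⟨X, hX, hXc⟩ := nPathList_to_m q0 hnl1
  have hXe : X = ∅ := by
    apply unitSet_eq_empty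
    intro hc
    obtain ⟨t, htnl, htout⟩ := hXc () hc
    obtain ⟨i, -, -, rfl⟩ := hnl3 t htnl
    exact hsafe i htout
  have hlen : nl.length = K := by
    have := congrArg List.length hnl2; simpa using this
  have hlab : nl.map (fun t => (t.lab : List A)) = List.ofFn (fun i : Fin K => ((W i : List A))) := by
    apply List.ext_getElem (by simp [hlen])
    intro i h1 h2
    simp only [List.getElem_map, List.getElem_ofFn]
    have h1' : i < (nl.map (·.lab)).length := by simpa [hlen] using h2
    have h'' := List.getElem_of_eq hnl2 h1'
    rw [List.getElem_map] at h''
    rw [List.getElem_ofFn] at h''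
    rw [h'']
    congr 2
    simp
  have hflat : (nl.map (fun t => (t.lab : List A))).flatten = flattenPrefix (blkW W) K := by
    rw [hlab]; rfl
  rw [hflat, hXe] at hX
  exact ⟨_, hX⟩

/-- An `M`-safe path labelled by a concatenation of blocks gives a safe path-list in the
localisation. -/
lemma mPath_to_nPathList (hacc : M.acc = genCoBuchi Unit) (hsd : M.SemanticallyDeterministic)
    (q0 : {q : M.Q // M.LangFrom q = R}) (bl : List (localAlphabet R)) :
    ∀ {q p : M.Q} (hq : M.LangFrom q = R) (hp : M.LangFrom p = R) {X : Set Unit},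
    PathCol M q ((bl.map (fun v => v.1)).flatten) X p → () ∉ X →
    ∃ nl, IsPathList (localAut M R q0) ⟨q, hq⟩ nl ⟨p, hp⟩ ∧
      nl.map (·.lab) = bl ∧ ∀ t ∈ nl, () ∉ t.out := by
  induction bl with
  | nil =>
    intro q p hq hp X h hX
    simp only [List.map_nil, List.flatten_nil] at h
    obtain ⟨rfl, -⟩ := pathCol_nil_inv h
    exact ⟨[], .nil _, rfl, by simp⟩
  | cons v bl ih =>
    intro q p hq hp X h hX
    simp only [List.map_cons, List.flatten_cons] at h
    obtain ⟨r, X₁, X₂, h1, h2, rfl⟩ := h.split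
    rw [notMem_union_unit] at hX
    have hr : M.LangFrom r = R := by
      rw [pathCol_residual hacc hsd h1, hq, localAlphabet_residual v.2]
    obtain ⟨nl, hnl1, hnl2, hnl3⟩ := ih hr hp h2 hX.2
    refine ⟨⟨⟨q, hq⟩, v, X₁, ⟨r, hr⟩⟩ :: nl, .cons _ h1 rfl hnl1, by simp [hnl2], ?_⟩
    intro t ht
    rcases List.mem_cons.1 ht with rfl | ht
    · exact hX.1
    · exact hnl3 t ht

/-- Key transfer: inclusion of safe languages in the localisation implies inclusion of
safe languages in `M`. -/
lemma safeLang_N_le (hacc : M.acc = genCoBuchi Unit) (hsd : M.SemanticallyDeterministic)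
    (hnf : M.NormalForm) (hsdet : M.SafeDeterministic)
    (q0 : {q : M.Q // M.LangFrom q = R}) {p q : M.Q}
    (hp : M.LangFrom p = R) (hq : M.LangFrom q = R)
    (h : (localAut M R q0).SafeLang ⟨p, hp⟩ ⊆ (localAut M R q0).SafeLang ⟨q, hq⟩) :
    M.SafeLang p ⊆ M.SafeLang q := by
  intro w hw
  apply safeLang_of_prefixes hsdet
  intro n
  obtain ⟨x, hx⟩ := safeLang_prefix_pathCol hw n
  have hconn : M.SafeConn p x := safe_pathCol_safeConn hnf hx (by simp)
  obtain ⟨u', hu'⟩ := safeConn_pathCol hconn.2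
  have hcyc : PathCol M p (listPrefix w n ++ u') ∅ p := by
    have := hx.append hu'
    simpa using this
  have hres : residualLang (listPrefix w n ++ u') R = R := by
    have := pathCol_residual hacc hsd hcyc
    rw [hp] at this
    exact this.symm
  rcases eq_or_ne (listPrefix w n ++ u') [] with hnil | hne
  · obtain ⟨h1, -⟩ := List.append_eq_nil_iff.1 hnil
    rw [h1]
    exact ⟨q, .nil q⟩
  · obtain ⟨bl, hbl⟩ := decomp_blocks hres
    have hblne : bl ≠ [] := by
      intro hb
      exact hne (by rw [← hbl, hb]; rfl)
    obtain ⟨nl, hnl1, hnl2, hnl3⟩ :=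
      mPath_to_nPathList hacc hsd q0 bl hp hp (hbl ▸ hcyc) (by simp)
    have hnlne : nl ≠ [] := by
      intro hn; rw [hn] at hnl2; exact hblne (by simpa using hnl2.symm)
    -- glue the constant cycle into an infinite safe word of the localisation
    obtain ⟨hrunN, hmemN, hpreN⟩ := glue_run (M := localAut M R q0)
      (z := fun _ => ⟨p, hp⟩) (l := fun _ => nl) (fun _ => hnlne) (fun _ => hnl1)
    set W : ℕ → localAlphabet R := fun n => (flatWord (fun _ => nl) (fun _ => hnlne) n).lab
      with hWdef
    have hWsafe : W ∈ (localAut M R q0).SafeLang ⟨p, hp⟩ := by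
      refine ⟨flatWord (fun _ => nl) (fun _ => hnlne), hrunN, ?_⟩
      intro m hout
      obtain ⟨k, -, hmk⟩ := hmemN 0 m (by simp)
      exact hnl3 _ hmk hout
    have hWq := h hWsafe
    obtain ⟨x', hx'⟩ := nSafe_prefix_m q0 hWq bl.length
    have hlen2 : nl.length = bl.length := by
      have := congrArg List.length hnl2; simpa using this
    have hflat : flattenPrefix (blkW W) bl.length = listPrefix w n ++ u' := by
      rw [← hbl]
      unfold flattenPrefix
      congr 1
      apply List.ext_getElem (by simp)
      intro i hi1 hi2
      rw [List.getElem_ofFn, List.getElem_map]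
      have hib : i < bl.length := by simpa using hi2
      have hi : i < nl.length := by omega
      have h1 : i < (flattenPrefix (fun _ : ℕ => nl) 1).length := by simpa using hi
      have hfi : flatWord (fun _ => nl) (fun _ => hnlne) i = nl[i]'hi := by
        rw [flatWord_eq_get (fun _ => hnlne) h1,
          List.getElem_of_eq (flattenPrefix_one _) h1]
      have hbli : bl[i]'hib = nl[i].lab := by
        have := List.getElem_of_eq hnl2.symm hib
        rw [this, List.getElem_map]
      show (blkW W i : List A) = _
      unfold blkW
      rw [hbli]
      show ((flatWord (fun _ => nl) (fun _ => hnlne) i).lab : List A) = _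
      rw [hfi]
    rw [hflat] at hx'
    obtain ⟨r, X₁, X₂, hr1, hr2, hXu⟩ := hx'.split
    obtain ⟨hX₁, -⟩ := union_eq_empty' hXu.symm
    exact ⟨r, hX₁ ▸ hr1⟩

end S11Aux7
section S11Aux8

open Automaton

variable {A : Type} {M : Automaton A (Set Unit)}

/-- `g` is safely readable from `q`. -/
def SafeReadable (M : Automaton A (Set Unit)) (q : M.Q) (g : List A) : Prop :=
  ∃ p, PathCol M q g ∅ p

lemma kill_prefix (hsdet : M.SafeDeterministic) {y : M.Q} {ζ : ℕ → A}
    (h : ζ ∉ M.SafeLang y) : ∃ m, ¬ SafeReadable M y (listPrefix ζ m) := by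
  by_contra hc
  push_neg at hc
  exact h (safeLang_of_prefixes hsdet hc)

lemma safeReadable_split {q : M.Q} {f g : List A} (h : SafeReadable M q (f ++ g)) :
    ∃ r, PathCol M q f ∅ r ∧ SafeReadable M r g := by
  obtain ⟨x, hx⟩ := h
  obtain ⟨r, X₁, X₂, h1, h2, hXu⟩ := hx.split
  obtain ⟨e1, e2⟩ := union_eq_empty' hXu.symm
  exact ⟨r, e1 ▸ h1, ⟨x, e2 ▸ h2⟩⟩

/-- Kill all states in a finite set at once: a safe continuation from `z` that no state
of `T` can read safely. -/
lemma killAll (hacc : M.acc = genCoBuchi Unit) (hsd : M.SemanticallyDeterministic)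
    (hnf : M.NormalForm) (hsdet : M.SafeDeterministic) {p qq : M.Q}
    (H : ∀ y z, M.Reach p y → M.SafeConn z qq → M.LangFrom y = M.LangFrom z →
      ∃ ζ, ζ ∈ M.SafeLang z ∧ ζ ∉ M.SafeLang y) :
    ∀ (n : ℕ) (T : Finset M.Q), T.card ≤ n → ∀ (z : M.Q), M.SafeConn z qq →
      (∀ y ∈ T, M.Reach p y ∧ M.LangFrom y = M.LangFrom z) →
      ∃ g z', PathCol M z g ∅ z' ∧ M.SafeConn z' qq ∧ ∀ y ∈ T, ¬ SafeReadable M y g := by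
  classical
  intro n
  induction n with
  | zero =>
    intro T hT z hz hTy
    have : T = ∅ := Finset.card_eq_zero.1 (by omega)
    subst this
    exact ⟨[], z, .nil z, hz, by simp⟩
  | succ n ih =>
    intro T hT z hz hTy
    rcases Finset.eq_empty_or_nonempty T with rfl | ⟨y, hy⟩
    · exact ⟨[], z, .nil z, hz, by simp⟩
    · obtain ⟨ζ, hζz, hζy⟩ := H y z (hTy y hy).1 hz (hTy y hy).2
      obtain ⟨m, hm⟩ := kill_prefix hsdet hζy
      set f := listPrefix ζ m with hf
      obtain ⟨z₁, hz₁⟩ := safeLang_prefix_pathCol hζz m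
      have hz₁conn : M.SafeConn z₁ qq :=
        SafeConn.trans' (SafeConn.symm' (safe_pathCol_safeConn hnf hz₁ (by simp))) hz
      -- endpoint function
      have echoice : ∀ y' : M.Q, SafeReadable M y' f → ∃ r, PathCol M y' f ∅ r := fun _ h => h
      set e : M.Q → M.Q := fun y' =>
        if h : SafeReadable M y' f then Classical.choose h else y' with he
      have hespec : ∀ y' (h : SafeReadable M y' f), PathCol M y' f ∅ (e y') := by
        intro y' h
        rw [he]; simp only [dif_pos h]
        exact Classical.choose_spec h
      set T' : Finset M.Q := ((T.erase y).filter (fun y' => SafeReadable M y' f)).image e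
        with hT'
      have hT'card : T'.card ≤ n := by
        have h1 : T'.card ≤ ((T.erase y).filter (fun y' => SafeReadable M y' f)).card :=
          Finset.card_image_le
        have h2 : ((T.erase y).filter (fun y' => SafeReadable M y' f)).card ≤ (T.erase y).card :=
          Finset.card_filter_le _ _
        have h3 : (T.erase y).card < T.card := Finset.card_erase_lt_of_mem hy
        omega
      have hT'y : ∀ y'' ∈ T', M.Reach p y'' ∧ M.LangFrom y'' = M.LangFrom z₁ := by
        intro y'' hy''
        obtain ⟨y', hy', rfl⟩ := Finset.mem_image.1 hy''
        rw [Finset.mem_filter] at hy'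
        obtain ⟨hy'T, hy'read⟩ := hy'
        have hy'T' := Finset.mem_of_mem_erase hy'T
        have hpc := hespec y' hy'read
        constructor
        · exact (hTy y' hy'T').1.trans hpc.reach
        · rw [pathCol_residual hacc hsd hpc, pathCol_residual hacc hsd hz₁,
            (hTy y' hy'T').2]
      obtain ⟨g', z'', hg'path, hg'conn, hg'kill⟩ := ih T' hT'card z₁ hz₁conn hT'y
      refine ⟨f ++ g', z'', by simpa using hz₁.append hg'path, hg'conn, ?_⟩
      intro y' hy'T hread
      obtain ⟨r, hr, hread'⟩ := safeReadable_split hread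
      rcases eq_or_ne y' y with rfl | hne
      · exact hm ⟨r, hr⟩
      · have hmem : y' ∈ (T.erase y).filter (fun y'' => SafeReadable M y'' f) :=
          Finset.mem_filter.2 ⟨Finset.mem_erase.2 ⟨hne, hy'T⟩, ⟨r, hr⟩⟩
        have hr_eq : r = e y' := safe_pathCol_unique hsdet hr (hespec y' ⟨r, hr⟩)
        exact hg'kill (e y') (Finset.mem_image.2 ⟨y', hmem, rfl⟩) (hr_eq ▸ hread')

/-- The diagonalisation: if `p` and `qq` are language-equivalent and `qq` has a nonempty
safe language, then some state reachable from `p` safely covers some state safely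
connected to `qq`. -/
lemma exists_comparable (hacc : M.acc = genCoBuchi Unit) (hsd : M.SemanticallyDeterministic)
    (hnf : M.NormalForm) (hsdet : M.SafeDeterministic) {p qq : M.Q}
    (hL : M.LangFrom p = M.LangFrom qq) (hζ : ∃ ζ0, ζ0 ∈ M.SafeLang qq) :
    ∃ y z, M.Reach p y ∧ M.SafeConn z qq ∧ M.LangFrom y = M.LangFrom z ∧
      M.SafeLang z ⊆ M.SafeLang y := by
  classical
  letI := M.fin
  by_contra hcon
  push_neg at hcon
  have H : ∀ y z, M.Reach p y → M.SafeConn z qq → M.LangFrom y = M.LangFrom z →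
      ∃ ζ, ζ ∈ M.SafeLang z ∧ ζ ∉ M.SafeLang y := by
    intro y z h1 h2 h3
    have := hcon y z h1 h2 h3
    exact Set.not_subset.1 this
  obtain ⟨ζ0, hζ0⟩ := hζ
  -- one stage of the construction
  have step : ∀ z : M.Q, M.SafeConn z qq →
      ∃ lst : List (AutTrans M.Q A (Set Unit)), ∃ x : M.Q,
        IsPathList M z lst x ∧ lst ≠ [] ∧ (∀ t ∈ lst, () ∉ t.out) ∧ M.SafeConn x qq ∧
        ∃ g, g <+: lst.map (·.lab) ∧
          ∀ y, M.Reach p y → M.LangFrom y = M.LangFrom z → ¬ SafeReadable M y g := by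
    intro z hzconn
    set T : Finset M.Q :=
      Finset.univ.filter (fun y => M.Reach p y ∧ M.LangFrom y = M.LangFrom z) with hT
    obtain ⟨g, z', hgpath, hz'conn, hgkill⟩ := killAll hacc hsd hnf hsdet H T.card T le_rfl
      z hzconn (fun y hy => (Finset.mem_filter.1 hy).2)
    obtain ⟨g₂, hg₂⟩ := safeConn_pathCol hz'conn.1
    obtain ⟨x₁, hx₁⟩ := safeLang_prefix_pathCol hζ0 1
    have hx₁conn : M.SafeConn x₁ qq :=
      SafeConn.symm' (safe_pathCol_safeConn hnf hx₁ (by simp))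
    have hfull : PathCol M z (g ++ (g₂ ++ listPrefix ζ0 1)) ∅ x₁ := by
      have := hgpath.append (hg₂.append hx₁)
      simpa using this
    obtain ⟨lst, hlst1, hlst2, hlst3⟩ := pathCol_iff_list.1 hfull
    refine ⟨lst, x₁, hlst1, ?_, ?_, hx₁conn, g, ?_, ?_⟩
    · intro h
      rw [h] at hlst2
      have : (g ++ (g₂ ++ listPrefix ζ0 1)).length = 0 := by rw [← hlst2]; rfl
      simp at this
    · intro t ht hout
      have : () ∈ outsUnion lst := outsUnion_mem_subset ht hout
      rw [hlst3] at this
      exact this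
    · rw [hlst2]; exact ⟨g₂ ++ listPrefix ζ0 1, rfl⟩
    · intro y h1 h2
      exact hgkill y (Finset.mem_filter.2 ⟨Finset.mem_univ y, h1, h2⟩)
  choose lstf xf hpath hne hsafe hconn hkill using step
  -- the infinite construction
  let Z : ℕ → {z : M.Q // M.SafeConn z qq} := fun n =>
    Nat.rec ⟨qq, SafeConn.refl' qq⟩ (fun _ zc => ⟨xf zc.1 zc.2, hconn zc.1 zc.2⟩) n
  set lseq : ℕ → List (AutTrans M.Q A (Set Unit)) := fun k => lstf (Z k).1 (Z k).2 with hlseq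
  have hlne : ∀ k, lseq k ≠ [] := fun k => hne (Z k).1 (Z k).2
  have hchain : ∀ k, IsPathList M ((Z k).1) (lseq k) ((Z (k+1)).1) := by
    intro k
    exact hpath (Z k).1 (Z k).2
  obtain ⟨hrun, hmem, hpre⟩ := glue_run hlne hchain
  set Wd : ℕ → A := fun n => (flatWord lseq hlne n).lab with hWd
  have hZ0 : (Z 0).1 = qq := rfl
  have hWsafe : Wd ∈ M.SafeLang qq := by
    refine ⟨flatWord lseq hlne, by rw [← hZ0]; exact hrun, ?_⟩
    intro m hout
    obtain ⟨k, -, hk⟩ := hmem 0 m (by simp)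
    exact hsafe (Z k).1 (Z k).2 _ hk hout
  have hWlang : Wd ∈ M.LangFrom p := by
    rw [hL]
    exact safeLang_subset_langFrom hacc qq hWsafe
  obtain ⟨ρ', hρ', hacc'⟩ := hWlang
  rw [hacc, mem_genCoBuchi_unit] at hacc'
  obtain ⟨n₀, hn₀⟩ := hacc'
  set b := (flattenPrefix lseq n₀).length with hb
  have hbn₀ : n₀ ≤ b := flattenPrefix_len hlne n₀
  set y := (ρ' b).src with hy
  have hyreach : M.Reach p y := by
    obtain ⟨X, hX, -⟩ := run_state_pathCol hρ' b
    exact hX.reach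
  have hyL : M.LangFrom y = M.LangFrom ((Z n₀).1) := by
    rw [run_state_residual hacc hsd hρ' b]
    have hZpath := chainAll hchain n₀
    rw [hZ0] at hZpath
    have := pathCol_residual hacc hsd hZpath.pathCol
    rw [this, ← hL, hb, hpre n₀]
  -- the run reads the n₀-th stage safely, contradiction with the kill property
  obtain ⟨g, hgpre, hgkill⟩ := hkill (Z n₀).1 (Z n₀).2
  apply hgkill y hyreach hyL
  -- extract the safe segment of ρ' on the n₀-th stage
  obtain ⟨sl, hsl1, hsl2, hsl3⟩ := run_segment hρ' b ((lseq n₀).length)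
  have hslsafe : outsUnion sl = ∅ := by
    apply unitSet_eq_empty
    intro hc
    obtain ⟨t, htl, htout⟩ := mem_outsUnion.1 hc
    obtain ⟨i, hi1, -, rfl⟩ := hsl3 t htl
    exact hn₀ i (by omega) htout
  have hu'ne : ∀ k, (lseq k).map (·.lab) ≠ [] := fun k => by simp [hlne k]
  have hWd' : Wd = flatWord (fun k => (lseq k).map (·.lab)) hu'ne := by
    rw [hWd]; exact flatWord_map lseq hlne (·.lab) hu'ne
  have hlenpre : (flattenPrefix (fun k => (lseq k).map (·.lab)) n₀).length = b := by
    rw [flattenPrefix_map]; simp [hb]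
  have hsllab : sl.map (·.lab) = (lseq n₀).map (·.lab) := by
    rw [hsl2]
    apply List.ext_getElem (by simp)
    intro i h1 h2
    rw [List.getElem_ofFn]
    have hi : i < ((lseq n₀).map (·.lab)).length := by simpa using h2
    have hblk := flatWord_block hu'ne n₀ i hi
    rw [hlenpre] at hblk
    show Wd (b + i) = _
    rw [congrFun hWd' (b + i), hblk]
  have hpathy : PathCol M y ((lseq n₀).map (·.lab)) ∅ ((ρ' (b + (lseq n₀).length)).src) := by
    have := hsl1.pathCol
    rw [hsllab, hslsafe] at this
    exact this
  obtain ⟨rest, hrest⟩ := hgpre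
  rw [← hrest] at hpathy
  obtain ⟨r, hr, -⟩ := safeReadable_split ⟨_, hpathy⟩
  exact ⟨r, hr⟩

/-- Reachability between language-equivalent states. -/
lemma reach_of_equiv (hacc : M.acc = genCoBuchi Unit) (hsd : M.SemanticallyDeterministic)
    (hnf : M.NormalForm) (hsdet : M.SafeDeterministic) (hsc : M.SafeCentralised)
    {p qq : M.Q} (hL : M.LangFrom p = M.LangFrom qq) : M.Reach p qq := by
  by_cases hζ : ∃ ζ0, ζ0 ∈ M.SafeLang qq
  · obtain ⟨y, z, h1, h2, h3, h4⟩ := exists_comparable hacc hsd hnf hsdet hL hζ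
    have hyz : M.SafeConn y z := hsc y z h3 (Or.inr h4)
    obtain ⟨u1, hu1⟩ := safeConn_pathCol hyz.1
    obtain ⟨u2, hu2⟩ := safeConn_pathCol h2.1
    exact (h1.trans hu1.reach).trans hu2.reach
  · have hsub : M.SafeLang qq ⊆ M.SafeLang p := by
      intro w hw; exact absurd ⟨w, hw⟩ hζ
    have := hsc p qq hL (Or.inr hsub)
    obtain ⟨u, hu⟩ := safeConn_pathCol this.1
    exact hu.reach

end S11Aux8
section S11Aux9

open Automaton

variable {A : Type} {M : Automaton A (Set Unit)}

lemma safe_run_segment {q : M.Q} {w : ℕ → A} {ρ : ℕ → AutTrans M.Q A (Set Unit)}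
    (hρ : M.IsRunFrom q w ρ) (hsafe : ∀ n, () ∉ (ρ n).out) (n k : ℕ) :
    PathCol M ((ρ n).src) (List.ofFn fun i : Fin k => w (n + i)) ∅ ((ρ (n + k)).src) := by
  obtain ⟨l, hl, hlab, hmem⟩ := run_segment hρ n k
  have hout : outsUnion l = ∅ := by
    apply unitSet_eq_empty
    intro hc
    obtain ⟨t, htl, htout⟩ := mem_outsUnion.1 hc
    obtain ⟨i, -, -, rfl⟩ := hmem t htl
    exact hsafe i htout
  have := hl.pathCol
  rwa [hlab, hout] at this

lemma exists_state_res (hacc : M.acc = genCoBuchi Unit) (hsd : M.SemanticallyDeterministic)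
    (hhd : M.HistoryDeterministic) (u : List A) :
    ∃ q, M.LangFrom q = residualLang u M.Lang := by
  by_cases hA : Nonempty A
  · obtain ⟨a⟩ := hA
    obtain ⟨r, hr⟩ := hhd
    set w := wordAppend u (fun _ => a) with hw
    have hrun := (hr w).1
    refine ⟨(M.resRun r w u.length).src, ?_⟩
    have := run_state_residual hacc hsd hrun u.length
    rw [this]
    show residualLang (listPrefix w u.length) M.Lang = residualLang u M.Lang
    have hpref : listPrefix w u.length = u := by
      apply List.ext_getElem (by simp)
      intro i h1 h2
      rw [listPrefix_getElem _ _ _ h1, hw, wordAppend_lt _ _ _ (by simpa using h2)]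
    rw [hpref]
  · refine ⟨M.init, ?_⟩
    ext v
    exact absurd ⟨v 0⟩ hA

lemma safeLang_empty_of_transient {R : Set (ℕ → A)} (hacc : M.acc = genCoBuchi Unit)
    (hsd : M.SemanticallyDeterministic) (hnf : M.NormalForm)
    (hloc : localAlphabet R = ∅) {p : M.Q} (hp : M.LangFrom p = R) :
    M.SafeLang p = ∅ := by
  rw [Set.eq_empty_iff_forall_notMem]
  intro w hw
  obtain ⟨ρ, hρ, hsafe⟩ := hw
  letI := M.fin
  obtain ⟨i, j, hij, hxy⟩ := Finite.exists_ne_map_eq_of_infinite (fun n => (ρ n).src)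
  wlog hlt : i < j generalizing i j
  · exact this j i hij.symm hxy.symm (by omega)
  have hseg1 : PathCol M ((ρ 0).src) (List.ofFn fun t : Fin i => w (0 + t)) ∅ ((ρ (0 + i)).src) :=
    safe_run_segment hρ hsafe 0 i
  have hseg2 : PathCol M ((ρ i).src) (List.ofFn fun t : Fin (j - i) => w (i + t)) ∅
      ((ρ (i + (j - i))).src) := safe_run_segment hρ hsafe i (j - i)
  rw [show i + (j - i) = j from by omega] at hseg2
  rw [hρ.1] at hseg1
  rw [show (0 : ℕ) + i = i from by omega] at hseg1
  have hconn : M.SafeConn p ((ρ i).src) := safe_pathCol_safeConn hnf hseg1 (by simp)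
  obtain ⟨u2, hu2⟩ := safeConn_pathCol hconn.2
  have hxy' : (ρ j).src = (ρ i).src := hxy.symm
  rw [hxy'] at hseg2
  have hcyc : PathCol M p ((List.ofFn fun t : Fin i => w (0 + t)) ++
      ((List.ofFn fun t : Fin (j - i) => w (i + t)) ++ u2)) ∅ p := by
    have := hseg1.append (hseg2.append hu2)
    simpa using this
  have hres : residualLang ((List.ofFn fun t : Fin i => w (0 + t)) ++
      ((List.ofFn fun t : Fin (j - i) => w (i + t)) ++ u2)) R = R := by
    have := pathCol_residual hacc hsd hcyc
    rw [hp] at this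
    exact this.symm
  have hnenil : (List.ofFn fun t : Fin i => w (0 + t)) ++
      ((List.ofFn fun t : Fin (j - i) => w (i + t)) ++ u2) ≠ [] := by
    intro hcontra
    have := congrArg List.length hcontra
    simp at this
    omega
  obtain ⟨v, hv⟩ := localAlphabet_nonempty hnenil hres
  rw [hloc] at hv
  exact hv

end S11Aux9
/-- for a nice, safe minimal and safe centralised HD coBüchi
automaton `A` recognising `L`: if `R` is a recurrent residual of `L` then the
localisation `A|_R` (with any initial state) is nice, safe minimal and safe
centralised; if `R` is a transient residual (`Σ_R = ∅`) then exactly one state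
of `A` recognises `R`. -/
theorem stmt_11 {A : Type} (L : Set (ℕ → A))
    (M : Automaton A (Set Unit)) (hacc : M.acc = genCoBuchi Unit)
    (hnice : M.Nice) (hsm : M.SafeMinimal) (hsc : M.SafeCentralised)
    (hhd : M.HistoryDeterministic) (hlang : M.Lang = L)
    (R : Set (ℕ → A)) (hres : ∃ u : List A, residualLang u L = R) :
    ((localAlphabet R).Nonempty →
      ∀ q0 : {q : M.Q // M.LangFrom q = R},
        (localAut M R q0).Nice ∧ (localAut M R q0).SafeMinimal ∧
          (localAut M R q0).SafeCentralised) ∧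
    (localAlphabet R = ∅ → ∃! q : M.Q, M.LangFrom q = R) := by
  obtain ⟨hreach, hsd, hnf, hsdet⟩ := hnice
  subst hlang
  constructor
  · rintro - q0
    refine ⟨⟨?_, ?_, ?_, ?_⟩, ?_, ?_⟩
    · -- reachability in the localisation
      intro q
      have hLeq : M.LangFrom q0.1 = M.LangFrom q.1 := q0.2.trans q.2.symm
      have hMreach : M.Reach q0.1 q.1 := reach_of_equiv hacc hsd hnf hsdet hsc hLeq
      obtain ⟨u, X, hu⟩ := reach_iff_pathCol.1 hMreach
      have hres : residualLang u R = R := by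
        have := pathCol_residual hacc hsd hu
        rw [q0.2, q.2] at this
        exact this.symm
      obtain ⟨bl, hbl⟩ := decomp_blocks hres
      have := mPath_to_nReach hacc hsd q0 bl q0.2 q.2 (hbl ▸ hu)
      exact this
    · -- semantic determinism
      intro t ht t' ht' hsrc hlab
      apply Set.ext
      intro W
      rw [show W ∈ (localAut M R q0).LangFrom t.dst ↔ flatW W ∈ R from
        nLang_iff hacc hsd q0 t.dst W,
        show W ∈ (localAut M R q0).LangFrom t'.dst ↔ flatW W ∈ R from
        nLang_iff hacc hsd q0 t'.dst W]
    · -- normal form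
      intro t ht hout
      have hpc : PathCol M t.src.1 t.lab.1 t.out t.dst.1 := ht
      have hMconn : M.SafeConn t.src.1 t.dst.1 := safe_pathCol_safeConn hnf hpc hout
      exact safeConn_M_to_N hacc hsd q0 t.src.2 t.dst.2 hMconn
    · -- safe determinism
      intro t ht t' ht' hout hout' hsrc hlab
      have ho : t.out = ∅ := unitSet_eq_empty hout
      have ho' : t'.out = ∅ := unitSet_eq_empty hout'
      have hpc : PathCol M t.src.1 t.lab.1 ∅ t.dst.1 := by
        have : PathCol M t.src.1 t.lab.1 t.out t.dst.1 := ht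
        rwa [ho] at this
      have hpc' : PathCol M t.src.1 t.lab.1 ∅ t'.dst.1 := by
        have : PathCol M t'.src.1 t'.lab.1 t'.out t'.dst.1 := ht'
        rw [ho', ← hsrc, ← hlab] at this
        exact this
      have hdst : t.dst.1 = t'.dst.1 := safe_pathCol_unique hsdet hpc hpc'
      exact AutTrans.ext' hsrc hlab (ho.trans ho'.symm) (Subtype.ext hdst)
    · -- safe minimality
      intro p q hLN hSN
      have h1 : M.SafeLang p.1 ⊆ M.SafeLang q.1 :=
        safeLang_N_le hacc hsd hnf hsdet q0 p.2 q.2 (le_of_eq hSN)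
      have h2 : M.SafeLang q.1 ⊆ M.SafeLang p.1 :=
        safeLang_N_le hacc hsd hnf hsdet q0 q.2 p.2 (le_of_eq hSN.symm)
      exact Subtype.ext (hsm p.1 q.1 (p.2.trans q.2.symm) (Set.Subset.antisymm h1 h2))
    · -- safe centralisation
      intro p q hLN hcomp
      have hLeq : M.LangFrom p.1 = M.LangFrom q.1 := p.2.trans q.2.symm
      have hMcomp : M.SafeLang p.1 ⊆ M.SafeLang q.1 ∨ M.SafeLang q.1 ⊆ M.SafeLang p.1 := by
        rcases hcomp with h | h
        · exact Or.inl (safeLang_N_le hacc hsd hnf hsdet q0 p.2 q.2 h)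
        · exact Or.inr (safeLang_N_le hacc hsd hnf hsdet q0 q.2 p.2 h)
      exact safeConn_M_to_N hacc hsd q0 p.2 q.2 (hsc p.1 q.1 hLeq hMcomp)
  · -- transient case
    intro hloc
    obtain ⟨u, hu⟩ := hres
    obtain ⟨q, hq⟩ := exists_state_res hacc hsd hhd u
    rw [hu] at hq
    refine ⟨q, hq, ?_⟩
    intro y hy
    apply hsm y q (hy.trans hq.symm)
    rw [safeLang_empty_of_transient hacc hsd hnf hloc hy,
      safeLang_empty_of_transient hacc hsd hnf hloc hq]
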